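/- Let V, V', and I be pairwise disjoint finite sets with |V| ≥ |V'|. If π : D_p^V × C_2^I → D_p^{V'} is a surjective group homomorphism, then there exists a subset V_0 ⊆ V with |V_0| = |V'| such that ker(π) = ⋂_{v∈V_0} ker(π_v). -/

import Mathlib

namespace Statement3Aux

open DihedralGroup

variable {p : ℕ}

/-- The sign homomorphism `D_p → {±1}`, sending rotations to `1` and reflections to `-1`. -/
def sgn (p : ℕ) : DihedralGroup p →* ℤˣ where
  toFun x := match x with
    | .r _ => 1
    | .sr _ => -1
  map_one' := rfl
  map_mul' := by rintro (a | a) (b | b) <;> simp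

theorem sgn_r (i : ZMod p) : sgn p (.r i) = 1 := rfl

theorem refl_of_sgn {x : DihedralGroup p} (h : sgn p x = -1) : ∃ j, x = .sr j := by
  cases x with
  | r i => exact absurd h (by rw [sgn_r]; decide)
  | sr j => exact ⟨j, rfl⟩

theorem two_ne_zero' (hp : p.Prime) (hodd : Odd p) : (2 : ZMod p) ≠ 0 := by
  haveI : Fact p.Prime := ⟨hp⟩
  intro h
  have h2 : ((2 : ℕ) : ZMod p) = 0 := by exact_mod_cast h
  have := (ZMod.natCast_eq_zero_iff 2 p).mp h2
  have hp2 : p = 2 := (Nat.prime_dvd_prime_iff_eq hp Nat.prime_two).mp this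
  rw [hp2] at hodd
  exact (Nat.not_odd_iff_even.mpr (by decide)) hodd

/-- The centralizer of a reflection `sr j` in `D_p` (for `p` an odd prime) is `{1, sr j}`. -/
theorem mem_S (hp : p.Prime) (hodd : Odd p) {x : DihedralGroup p} {j : ZMod p}
    (h : Commute x (.sr j)) : x = 1 ∨ x = .sr j := by
  haveI : Fact p.Prime := ⟨hp⟩
  have h2 := two_ne_zero' hp hodd
  rw [Commute, SemiconjBy] at h
  cases x with
  | r i =>
    left
    simp only [r_mul_sr, sr_mul_r, sr.injEq] at h
    have : (2 : ZMod p) * i = 0 := by linear_combination -h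
    rcases mul_eq_zero.mp this with h' | h'
    · exact absurd h' h2
    · rw [one_def, h']
  | sr i =>
    right
    simp only [sr_mul_sr, r.injEq] at h
    have : (2 : ZMod p) * (i - j) = 0 := by linear_combination -h
    rcases mul_eq_zero.mp this with h' | h'
    · exact absurd h' h2
    · have : i = j := by linear_combination h'
      rw [this]

/-- The subgroup `{1, sr j}` of `D_p`. -/
def K (p : ℕ) (j : ZMod p) : Subgroup (DihedralGroup p) where
  carrier := {x | x = 1 ∨ x = .sr j}
  one_mem' := Or.inl rfl
  mul_mem' := by
    rintro a b (rfl | rfl) (rfl | rfl)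
    · exact Or.inl (one_mul 1)
    · exact Or.inr (one_mul _)
    · exact Or.inr (mul_one _)
    · exact Or.inl (by simp [one_def, -r_zero])
  inv_mem' := by
    rintro a (rfl | rfl)
    · exact Or.inl inv_one
    · exact Or.inr (inv_eq_of_mul_eq_one_right (by simp [one_def, -r_zero]))

theorem mem_K {x : DihedralGroup p} {j : ZMod p} :
    x ∈ K p j ↔ x = 1 ∨ x = .sr j := Iff.rfl

theorem r_one_ne (hp : p.Prime) (j : ZMod p) : (.r 1 : DihedralGroup p) ∉ K p j := by
  haveI : Fact p.Prime := ⟨hp⟩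
  rintro (h | h)
  · rw [one_def, r.injEq] at h
    exact one_ne_zero h
  · exact absurd h (by simp)

section Key

variable {V I : Type} [Fintype V] [DecidableEq V] [Finite I]
  (φ : ((V → DihedralGroup p) × (I → ℤˣ)) →* DihedralGroup p)

/-- Restriction of `φ` to the `v`-th dihedral coordinate. -/
def ψ (v : V) : DihedralGroup p →* DihedralGroup p :=
  φ.comp ((MonoidHom.inl _ _).comp (MonoidHom.mulSingle (fun _ : V => DihedralGroup p) v))

/-- Restriction of `φ` to the `C_2^I` factor. -/
def ψI : (I → ℤˣ) →* DihedralGroup p :=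
  φ.comp (MonoidHom.inr _ _)

theorem ψ_apply (v : V) (a : DihedralGroup p) :
    ψ φ v a = φ (Pi.mulSingle v a, 1) := rfl

theorem ψI_apply (c : I → ℤˣ) : ψI φ c = φ (1, c) := rfl

theorem commute_ψψ {v w : V} (hvw : v ≠ w) (a b : DihedralGroup p) :
    Commute (ψ φ v a) (ψ φ w b) := by
  rw [ψ_apply, ψ_apply]
  exact (Commute.map (by
    rw [Commute, SemiconjBy, Prod.mk_mul_mk, Prod.mk_mul_mk, Prod.mk.injEq]
    exact ⟨(Pi.mulSingle_commute (f := fun _ : V => DihedralGroup p) hvw a b).eq, rfl⟩) φ)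

theorem commute_ψψI (v : V) (a : DihedralGroup p) (c : I → ℤˣ) :
    Commute (ψ φ v a) (ψI φ c) := by
  rw [ψ_apply, ψI_apply]
  exact (Commute.map (by
    rw [Commute, SemiconjBy, Prod.mk_mul_mk, Prod.mk_mul_mk, Prod.mk.injEq]
    exact ⟨by rw [mul_one, one_mul], by rw [mul_one, one_mul]⟩) φ)

theorem commute_ψIψI (c c' : I → ℤˣ) : Commute (ψI φ c) (ψI φ c') := by
  rw [ψI_apply, ψI_apply]
  exact (Commute.map (by
    rw [Commute, SemiconjBy, Prod.mk_mul_mk, Prod.mk_mul_mk, Prod.mk.injEq]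
    exact ⟨rfl, mul_comm c c'⟩) φ)

theorem hcomm (f : V → DihedralGroup p) :
    (↑(Finset.univ : Finset V) : Set V).Pairwise (Function.onFun Commute fun w => ψ φ w (f w)) :=
  fun v _ w _ hvw => commute_ψψ φ hvw _ _

/-- Decomposition of `φ` on the first factor. -/
theorem F1a (f : V → DihedralGroup p) :
    φ (f, (1 : I → ℤˣ)) = Finset.univ.noncommProd (fun w => ψ φ w (f w)) (hcomm φ f) := by
  conv_lhs => rw [← Finset.noncommProd_mulSingle f]
  have : ((Finset.univ.noncommProd (fun i => Pi.mulSingle i (f i)) fun i _ j _ h =>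
      Pi.mulSingle_apply_commute f i j, 1) : (V → DihedralGroup p) × (I → ℤˣ)) =
      (MonoidHom.inl (V → DihedralGroup p) (I → ℤˣ))
        (Finset.univ.noncommProd (fun i => Pi.mulSingle i (f i)) fun i _ j _ h =>
          Pi.mulSingle_apply_commute f i j) := rfl
  rw [this, ← MonoidHom.comp_apply]
  exact (Finset.map_noncommProd (g := φ.comp (MonoidHom.inl (V → DihedralGroup p) (I → ℤˣ)))
    _ _ _).trans (Finset.noncommProd_congr rfl (fun x _ => rfl) _)

/-- Decomposition of `φ` into its single-coordinate restrictions. -/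
theorem F1 (g : (V → DihedralGroup p) × (I → ℤˣ)) :
    φ g = (Finset.univ.noncommProd (fun w => ψ φ w (g.1 w)) (hcomm φ g.1)) * ψI φ g.2 := by
  obtain ⟨f, c⟩ := g
  have h2 : φ (f, c) = φ (f, 1) * φ (1, c) := by
    rw [← map_mul, Prod.mk_mul_mk, mul_one, one_mul]
  rw [h2, F1a]
  rfl

/-- If all single-coordinate restrictions land in `{1, sr j}`, we get a contradiction
with surjectivity. -/
theorem absS (hp : p.Prime) (hs : Function.Surjective φ) (j : ZMod p)
    (h1 : ∀ v a, ψ φ v a ∈ K p j) (h2 : ∀ c, ψI φ c ∈ K p j) : False := by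
  have hK : ∀ g, φ g ∈ K p j := by
    intro g
    rw [F1 φ g]
    exact (K p j).mul_mem
      (Subgroup.noncommProd_mem _ _ (fun w _ => h1 w _)) (h2 _)
  obtain ⟨g, hg⟩ := hs (.r 1)
  exact r_one_ne hp j (hg ▸ hK g)

theorem key (hp : p.Prime) (hodd : Odd p) (hs : Function.Surjective φ) :
    ∃ v : V, ∀ g, φ g = 1 ↔ g.1 v = 1 := by
  haveI : Fact p.Prime := ⟨hp⟩
  haveI : NeZero p := ⟨hp.ne_zero⟩
  -- find a coordinate whose restriction contains a reflection
  obtain ⟨g, hg⟩ := hs (.sr 0)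
  have hsgn : sgn p (φ g) = -1 := by rw [hg]; rfl
  rw [F1 φ g, map_mul] at hsgn
  have hψIg : sgn p (ψI φ g.2) = 1 := by
    rcases Int.units_eq_one_or (sgn p (ψI φ g.2)) with h | h
    · exact h
    · exfalso
      obtain ⟨j, hj⟩ := refl_of_sgn h
      refine absS φ hp hs j (fun v a => ?_) (fun c => ?_)
      · exact mem_S hp hodd (hj ▸ commute_ψψI φ v a g.2)
      · exact mem_S hp hodd (hj ▸ commute_ψIψI φ c g.2)
  rw [hψIg, mul_one, Finset.map_noncommProd, Finset.noncommProd_eq_prod] at hsgn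
  have : ∃ v : V, sgn p (ψ φ v (g.1 v)) = -1 := by
    by_contra hall
    push_neg at hall
    have : ∀ v ∈ Finset.univ, sgn p (ψ φ v (g.1 v)) = 1 := fun v _ =>
      (Int.units_eq_one_or _).resolve_right (hall v)
    rw [Finset.prod_eq_one this] at hsgn
    exact absurd hsgn (by decide)
  obtain ⟨v, hv⟩ := this
  obtain ⟨j, hj⟩ := refl_of_sgn hv
  -- all other coordinates are killed by φ
  have C1 : ∀ w, w ≠ v → ∀ b, ψ φ w b = 1 := by
    intro w hw b
    rcases mem_S hp hodd (hj ▸ commute_ψψ φ hw b (g.1 v)) with h | h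
    · exact h
    · exfalso
      refine absS φ hp hs j (fun u a => ?_) (fun c => ?_)
      · rcases eq_or_ne u w with rfl | hu
        · exact mem_S hp hodd (hj ▸ commute_ψψ φ hw a (g.1 v))
        · exact mem_S hp hodd (h ▸ commute_ψψ φ hu a b)
      · exact mem_S hp hodd (h ▸ (commute_ψψI φ w b c).symm)
  have C2 : ∀ c, ψI φ c = 1 := by
    intro c
    rcases mem_S hp hodd (hj ▸ (commute_ψψI φ v (g.1 v) c).symm) with h | h
    · exact h
    · exfalso
      refine absS φ hp hs j (fun u a => ?_) (fun c' => ?_)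
      · exact mem_S hp hodd (h ▸ commute_ψψI φ u a c)
      · exact mem_S hp hodd (h ▸ commute_ψIψI φ c' c)
  -- φ computes the v-th coordinate
  have hφeq : ∀ g' : (V → DihedralGroup p) × (I → ℤˣ), φ g' = ψ φ v (g'.1 v) := by
    intro g'
    rw [F1 φ g', C2, mul_one,
      ← Finset.mul_noncommProd_erase Finset.univ (Finset.mem_univ v) _ (hcomm φ g'.1)]
    exact (congrArg (ψ φ v (g'.1 v) * ·) ((Finset.noncommProd_eq_pow_card _ _ _ 1
        (fun w hw => C1 w (Finset.ne_of_mem_erase hw) _)).trans (one_pow _))).trans (mul_one _)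
  have hψsurj : Function.Surjective (ψ φ v) := by
    intro d
    obtain ⟨g', hg'⟩ := hs d
    exact ⟨g'.1 v, by rw [← hφeq g', hg']⟩
  have hψinj : Function.Injective (ψ φ v) :=
    Finite.injective_iff_surjective.mpr hψsurj
  refine ⟨v, fun g' => ⟨fun h => ?_, fun h => ?_⟩⟩
  · rw [hφeq g'] at h
    exact hψinj (by rw [h, map_one])
  · rw [hφeq g', h, map_one]

end Key

end Statement3Aux

/-- Fix an odd prime `p`, with `C_2 = {±1} = ℤˣ` and `D_p` the dihedral
group of order `2p`.  Let `V`, `V'`, `I` be (pairwise disjoint) finite sets with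
`|V| ≥ |V'|`.  If `π : D_p^V × C_2^I → D_p^{V'}` is a surjective group homomorphism, then
there is a subset `V₀ ⊆ V` with `|V₀| = |V'|` such that
`ker π = ⋂_{v ∈ V₀} ker (π_v)`, where `π_v` is the projection onto the `v` coordinate. -/
theorem statement_3 (p : ℕ) (hp : p.Prime) (hodd : Odd p)
    (V V' I : Type) [Finite V] [Finite V'] [Finite I]
    (hcard : Nat.card V' ≤ Nat.card V)
    (π : ((V → DihedralGroup p) × (I → ℤˣ)) →* (V' → DihedralGroup p))
    (hsurj : Function.Surjective π) :
    ∃ V0 : Finset V, V0.card = Nat.card V' ∧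
      π.ker = ⨅ v ∈ V0,
        ((Pi.evalMonoidHom (fun _ : V => DihedralGroup p) v).comp
          (MonoidHom.fst (V → DihedralGroup p) (I → ℤˣ))).ker := by
  classical
  cases nonempty_fintype V
  cases nonempty_fintype V'
  -- for each v', the composition with evaluation is surjective
  have hφsurj : ∀ v' : V',
      Function.Surjective ((Pi.evalMonoidHom (fun _ : V' => DihedralGroup p) v').comp π) := by
    intro v' d
    obtain ⟨g, hg⟩ := hsurj (Pi.mulSingle v' d)
    exact ⟨g, by simp [hg]⟩
  choose c hc using fun v' : V' =>
    Statement3Aux.key ((Pi.evalMonoidHom (fun _ : V' => DihedralGroup p) v').comp π)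
      hp hodd (hφsurj v')
  -- hc : ∀ v' g, π g v' = 1 ↔ g.1 (c v') = 1
  have hc' : ∀ (v' : V') (g), π g v' = 1 ↔ g.1 (c v') = 1 := hc
  have hinj : Function.Injective c := by
    intro a b hab
    by_contra hne
    obtain ⟨g, hg⟩ := hsurj (Pi.mulSingle a (.sr 0))
    have hb : π g b = 1 := by
      rw [hg, Pi.mulSingle_apply, if_neg (Ne.symm hne)]
    have hgb : g.1 (c b) = 1 := (hc' b g).mp hb
    have ha : π g a = 1 := (hc' a g).mpr (hab ▸ hgb)
    rw [hg, Pi.mulSingle_apply, if_pos rfl] at ha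
    exact absurd ha (by simp [DihedralGroup.one_def, -DihedralGroup.r_zero])
  refine ⟨Finset.image c Finset.univ, ?_, ?_⟩
  · rw [Finset.card_image_of_injective _ hinj, Finset.card_univ, Nat.card_eq_fintype_card]
  · ext g
    simp only [MonoidHom.mem_ker, Subgroup.mem_iInf, Finset.mem_image, Finset.mem_univ,
      true_and, forall_exists_index]
    constructor
    · rintro h v v' rfl
      have : π g v' = 1 := by rw [h]; rfl
      have := (hc' v' g).mp this
      simpa using this
    · intro h
      funext v'
      have := h (c v') v' rfl
      exact (hc' v' g).mpr (by simpa using this)
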